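/- Let E be a directed graph and G_E its graph groupoid. Then G_E is topologically transitive (for every pair of nonempty open subsets U,V of the unit space G_E⁰ there exists γ∈G_E with d(γ)∈U and r(γ)∈V) if and only if E is downward directed, i.e., for every pair of vertices u,v∈E⁰ there is a vertex w∈E⁰ such that there are paths from u to w and from v to w. -/

import Mathlib

open Set

section Graph

variable {V E : Type*} (gs gr : E → V)

/-- `(v, l)` is a finite path of the directed graph with source map `gs` and range map
`gr`: the edges of `l` compose (`gr eᵢ = gs eᵢ₊₁`) and start at `v` (`l = []` gives the
path of length zero at `v`). -/
def IsPathL (v : V) (l : List E) : Prop :=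
  (∀ e ∈ l.head?, gs e = v) ∧ l.Chain' fun a b => gr a = gs b

/-- The range vertex of the finite path `(v, l)`. -/
def pathRng (v : V) (l : List E) : V := l.foldl (fun _ e => gr e) v

/-- A vertex is regular if it emits at least one and at most finitely many edges. -/
def RegularVert (v : V) : Prop :=
  {e : E | gs e = v}.Finite ∧ {e : E | gs e = v}.Nonempty

/-- A boundary path: either a finite path whose range is not a regular vertex, or an
infinite path (an infinite composable sequence of edges). -/
def IsBoundary : (V × List E) ⊕ (ℕ → E) → Prop
  | .inl (v, l) => IsPathL gs gr v l ∧ ¬ RegularVert gs (pathRng gr v l)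
  | .inr f => ∀ n, gr (f n) = gs (f (n + 1))

/-- The boundary path space `X` of the graph: the unit space of the graph groupoid. -/
def BPath := {x : (V × List E) ⊕ (ℕ → E) // IsBoundary gs gr x}

/-- The boundary path `x` starts with the finite path `(w, m)`. -/
def HasPrefixP (w : V) (m : List E) (x : BPath gs gr) : Prop :=
  match x.1 with
  | .inl (v, l) => v = w ∧ m <+: l
  | .inr f => (m = [] → gs (f 0) = w) ∧ (∀ e ∈ m.head?, gs e = w) ∧
      ∀ (i : ℕ) (h : i < m.length), f i = m.get ⟨i, h⟩

/-- The cylinder set `Z(μ) = {μ x : x ∈ X}` of a finite path `μ = (w, m)`. -/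
def ZP (w : V) (m : List E) : Set (BPath gs gr) := {x | HasPrefixP gs gr w m x}

/-- The topology on the boundary path space `X = G_E⁰`, with basic compact open sets
`Z(μ∖F) = Z(μ) ∖ ⋃_{e ∈ F} Z(μe)` for finite sets `F` of edges with source `r(μ)`. -/
def unitTop : TopologicalSpace (BPath gs gr) :=
  TopologicalSpace.generateFrom
    {A | ∃ (w : V) (m : List E) (F : Set E), F.Finite ∧ IsPathL gs gr w m ∧
      (∀ e ∈ F, gs e = pathRng gr w m) ∧
      A = ZP gs gr w m \ ⋃ e ∈ F, ZP gs gr w (m ++ [e])}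

/-- `x` and `y` have a common tail: removing the first `m` edges of `x` and the first
`n` edges of `y` yields the same boundary path. -/
def AgreeFrom (m n : ℕ) (x y : BPath gs gr) : Prop :=
  match x.1, y.1 with
  | .inl (v, l), .inl (w, t) =>
      m ≤ l.length ∧ n ≤ t.length ∧
      pathRng gr v (l.take m) = pathRng gr w (t.take n) ∧ l.drop m = t.drop n
  | .inr f, .inr g => ∀ i : ℕ, f (m + i) = g (n + i)
  | _, _ => False

/-- The graph groupoid `G_E = {(αx, |α| − |β|, βx)}`, as triples `(x, k, y)` of
boundary paths `x, y` having a common tail, with `k` the difference of the lengths of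
the removed prefixes.  Here `r (x,k,y) = x` and `d (x,k,y) = y`; composition is
`(x,k,y)(y,l,z) = (x,k+l,z)` and inversion `(x,k,y)⁻¹ = (y,−k,x)`. -/
def GrGpd := {γ : BPath gs gr × ℤ × BPath gs gr //
  ∃ m n : ℕ, AgreeFrom gs gr m n γ.1 γ.2.2 ∧ γ.2.1 = (m : ℤ) - (n : ℤ)}

/-- The basic bisection `Z(μ, ν) = {(μz, |μ|−|ν|, νz)}` of the graph groupoid. -/
def ZZ (u : V) (p : List E) (w : V) (q : List E) : Set (GrGpd gs gr) :=
  {γ | HasPrefixP gs gr u p γ.1.1 ∧ HasPrefixP gs gr w q γ.1.2.2 ∧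
    γ.1.2.1 = (p.length : ℤ) - (q.length : ℤ) ∧
    AgreeFrom gs gr p.length q.length γ.1.1 γ.1.2.2}

/-- The topology of the graph groupoid `G_E`, with basic compact open bisections
`Z((μ,ν)∖F) = Z(μ,ν) ∖ ⋃_{α ∈ F} Z(μα, να)`, making it a Hausdorff ample groupoid. -/
def gpdTop : TopologicalSpace (GrGpd gs gr) :=
  TopologicalSpace.generateFrom
    {A | ∃ (u : V) (p : List E) (w : V) (q : List E) (F : Set (List E)), F.Finite ∧
      IsPathL gs gr u p ∧ IsPathL gs gr w q ∧ pathRng gr u p = pathRng gr w q ∧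
      (∀ α ∈ F, IsPathL gs gr (pathRng gr u p) α) ∧
      A = ZZ gs gr u p w q \ ⋃ α ∈ F, ZZ gs gr u (p ++ α) w (q ++ α)}

/-- A cycle: a nonempty closed path whose edges have pairwise distinct sources. -/
def IsCycleP (v : V) (l : List E) : Prop :=
  IsPathL gs gr v l ∧ l ≠ [] ∧ pathRng gr v l = v ∧ (l.map gs).Nodup

/-- The path `l` has an exit: some edge `e` shares its source with an edge of `l` but
differs from it. -/
def HasExitP (l : List E) : Prop := ∃ e a : E, a ∈ l ∧ gs e = gs a ∧ e ≠ a

end Graph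


section Aux

open List Set

variable {V E : Type*} {gs gr : E → V}

lemma pathRng_append (v : V) (a b : List E) :
    pathRng gr v (a ++ b) = pathRng gr (pathRng gr v a) b := by
  simp [pathRng, List.foldl_append]

lemma pathRng_concat (v : V) (a : List E) (e : E) :
    pathRng gr v (a ++ [e]) = gr e := by
  simp [pathRng, List.foldl_append]

lemma pathRng_getLast (v : V) (a : List E) (h : a ≠ []) :
    pathRng gr v a = gr (a.getLast h) := by
  conv_lhs => rw [← List.dropLast_append_getLast h]
  exact pathRng_concat v _ _

lemma isPathL_append {v : V} {a b : List E} (ha : IsPathL gs gr v a)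
    (hb : IsPathL gs gr (pathRng gr v a) b) : IsPathL gs gr v (a ++ b) := by
  rcases ha with ⟨ha1, ha2⟩
  rcases hb with ⟨hb1, hb2⟩
  constructor
  · rcases a with _ | ⟨e, t⟩
    · intro e he
      have : pathRng gr v ([] : List E) = v := rfl
      simpa [this] using hb1 e he
    · intro e' he'
      simp at he'
      subst he'
      exact ha1 _ rfl
  · apply List.IsChain.append ha2 hb2
    intro x hx y hy
    rcases a with _ | ⟨e0, t0⟩
    · simp at hx
    · have hne : (e0 :: t0 : List E) ≠ [] := by simp
      have hlast : x = (e0 :: t0).getLast hne := by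
        rw [List.getLast?_eq_getLast hne] at hx
        simpa using hx.symm
      have := hb1 y (by simpa using hy)
      rw [hlast, this, pathRng_getLast v _ hne]

lemma isPathL_take {v : V} {l : List E} (h : IsPathL gs gr v l) (m : ℕ) :
    IsPathL gs gr v (l.take m) := by
  refine ⟨?_, h.2.take m⟩
  intro e he
  rw [List.head?_take] at he
  split at he
  · simp at he
  · exact h.1 e he

lemma isPrefix_get {a b : List E} (h : a <+: b) (i : ℕ) (hi : i < a.length) :
    a.get ⟨i, hi⟩ = b.get ⟨i, lt_of_lt_of_le hi h.length_le⟩ := by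
  simpa using h.getElem hi

lemma hasPrefixP_inl {w v : V} {m l : List E} {hb} :
    HasPrefixP gs gr w m (⟨Sum.inl (v, l), hb⟩ : BPath gs gr) ↔ v = w ∧ m <+: l := Iff.rfl

lemma hasPrefixP_inr {w : V} {m : List E} {f : ℕ → E} {hb} :
    HasPrefixP gs gr w m (⟨Sum.inr f, hb⟩ : BPath gs gr) ↔
      ((m = [] → gs (f 0) = w) ∧ (∀ e ∈ m.head?, gs e = w) ∧
        ∀ (i : ℕ) (h : i < m.length), f i = m.get ⟨i, h⟩) := Iff.rfl

lemma hasPrefixP_inr_start {w : V} {m : List E} {f : ℕ → E} {hb}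
    (h : HasPrefixP gs gr w m (⟨Sum.inr f, hb⟩ : BPath gs gr)) : gs (f 0) = w := by
  rw [hasPrefixP_inr] at h
  obtain ⟨h0, hh, hg⟩ := h
  rcases m with _ | ⟨e, t⟩
  · exact h0 rfl
  · have : f 0 = e := hg 0 (by simp)
    rw [this]
    exact hh e rfl

lemma hasPrefixP_mono {m' m : List E} (hpre : m' <+: m) {w : V} {x : BPath gs gr}
    (h : HasPrefixP gs gr w m x) : HasPrefixP gs gr w m' x := by
  obtain ⟨x1, hb⟩ := x
  rcases x1 with ⟨v, l⟩ | f
  · exact ⟨h.1, hpre.trans h.2⟩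
  · rw [hasPrefixP_inr] at h ⊢
    obtain ⟨h0, hh, hg⟩ := h
    refine ⟨fun _ => hasPrefixP_inr_start (hb := hb) (hasPrefixP_inr.mpr ⟨h0, hh, hg⟩), ?_, ?_⟩
    · rcases m' with _ | ⟨e', t'⟩
      · intro e he; simp at he
      · intro e he
        simp only [List.head?_cons, Option.mem_def, Option.some.injEq] at he
        subst he
        obtain ⟨r, rfl⟩ := hpre
        exact hh _ rfl
    · intro i hi
      exact (hg i (lt_of_lt_of_le hi hpre.length_le)).trans (isPrefix_get hpre i hi).symm

lemma zp_mono {m' m : List E} (hpre : m' <+: m) (w : V) :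
    ZP gs gr w m ⊆ ZP gs gr w m' := fun _ hx => hasPrefixP_mono hpre hx

lemma prefix_nest {w1 w2 : V} {m1 m2 : List E} {x : BPath gs gr}
    (h1 : HasPrefixP gs gr w1 m1 x) (h2 : HasPrefixP gs gr w2 m2 x)
    (hlen : m1.length ≤ m2.length) : m1 <+: m2 := by
  obtain ⟨x1, hb⟩ := x
  rcases x1 with ⟨v, l⟩ | f
  · exact List.prefix_of_prefix_length_le h1.2 h2.2 hlen
  · rw [hasPrefixP_inr] at h1 h2
    rw [List.prefix_iff_eq_take]
    apply List.ext_get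
    · simp [Nat.min_eq_left hlen]
    · intro i hi1 hi2
      have hi2' : i < m2.length := lt_of_lt_of_le hi1 hlen
      have e1 := h1.2.2 i hi1
      have e2 := h2.2.2 i hi2'
      simp only [List.get_eq_getElem] at e1 e2 ⊢
      rw [← List.getElem_take' hi2' hi1, ← e1, ← e2]

lemma prefix_vertex_eq {w1 w2 : V} {m1 m2 : List E} {x : BPath gs gr}
    (h1 : HasPrefixP gs gr w1 m1 x) (h2 : HasPrefixP gs gr w2 m2 x) : w1 = w2 := by
  obtain ⟨x1, hb⟩ := x
  rcases x1 with ⟨v, l⟩ | f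
  · rw [← h1.1, ← h2.1]
  · rw [← hasPrefixP_inr_start h1, ← hasPrefixP_inr_start h2]

lemma prefix_edge_unique {w : V} {m : List E} {e e' : E} {x : BPath gs gr}
    (h1 : HasPrefixP gs gr w (m ++ [e]) x) (h2 : HasPrefixP gs gr w (m ++ [e']) x) :
    e = e' := by
  have hp : m ++ [e] <+: m ++ [e'] := prefix_nest h1 h2 (by simp)
  have := hp.eq_of_length (by simp)
  simpa using this

lemma infpath_take (f : ℕ → E) (hf : ∀ n, gr (f n) = gs (f (n + 1))) {v : V}
    (hv : gs (f 0) = v) (m : ℕ) :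
    IsPathL gs gr v ((List.range m).map f) ∧
      pathRng gr v ((List.range m).map f) = gs (f m) := by
  induction m with
  | zero => exact ⟨⟨by simp, List.isChain_nil⟩, hv.symm⟩
  | succ m ih =>
    rw [List.range_succ, List.map_append]
    constructor
    · refine isPathL_append ih.1 ⟨?_, List.isChain_singleton _⟩
      intro e he
      simp only [List.map_cons, List.map_nil, List.head?_cons, Option.mem_def,
        Option.some.injEq] at he
      subst he
      exact ih.2.symm
    · rw [List.map_singleton, pathRng_concat, hf m]

lemma agreeFrom_inl_inl {m n : ℕ} {v w : V} {l t : List E} {hb1 hb2} :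
    AgreeFrom gs gr m n (⟨Sum.inl (v, l), hb1⟩ : BPath gs gr) ⟨Sum.inl (w, t), hb2⟩ ↔
      (m ≤ l.length ∧ n ≤ t.length ∧
        pathRng gr v (l.take m) = pathRng gr w (t.take n) ∧ l.drop m = t.drop n) := Iff.rfl

lemma agreeFrom_inr_inr {m n : ℕ} {f g : ℕ → E} {hb1 hb2} :
    AgreeFrom gs gr m n (⟨Sum.inr f, hb1⟩ : BPath gs gr) ⟨Sum.inr g, hb2⟩ ↔
      ∀ i, f (m + i) = g (n + i) := Iff.rfl

lemma agreeFrom_inr_inl {m n : ℕ} {f : ℕ → E} {v : V} {l : List E} {hb1 hb2} :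
    AgreeFrom gs gr m n (⟨Sum.inr f, hb1⟩ : BPath gs gr) ⟨Sum.inl (v, l), hb2⟩ ↔ False := Iff.rfl

lemma agreeFrom_inl_inr {m n : ℕ} {f : ℕ → E} {v : V} {l : List E} {hb1 hb2} :
    AgreeFrom gs gr m n (⟨Sum.inl (v, l), hb1⟩ : BPath gs gr) ⟨Sum.inr f, hb2⟩ ↔ False := Iff.rfl

open Classical in
/-- One step of the boundary-path construction: pick an edge out of `w` if any. -/
noncomputable def stepE (gs : E → V) (w : V) : Option E :=
  if h : RegularVert gs w then some h.2.choose else none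

lemma stepE_some {w : V} {e : E} (h : stepE gs w = some e) : gs e = w := by
  unfold stepE at h
  split at h
  · rename_i hreg
    have := hreg.2.choose_spec
    cases h
    exact this
  · cases h

lemma stepE_none {w : V} (h : stepE gs w = none) : ¬ RegularVert gs w := by
  unfold stepE at h
  split at h
  · cases h
  · assumption

/-- The vertex sequence of the boundary-path construction. -/
noncomputable def vtxSeq (gs gr : E → V) (v : V) : ℕ → V
  | 0 => v
  | n + 1 => match stepE gs (vtxSeq gs gr v n) with
    | some e => gr e
    | none => vtxSeq gs gr v n

lemma exists_path_vtx (v : V) (n : ℕ)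
    (h : ∀ i < n, (stepE gs (vtxSeq gs gr v i)).isSome) :
    ∃ l : List E, IsPathL gs gr v l ∧ pathRng gr v l = vtxSeq gs gr v n := by
  induction n with
  | zero => exact ⟨[], ⟨by simp, List.isChain_nil⟩, rfl⟩
  | succ n ih =>
    obtain ⟨l, hl, hrng⟩ := ih (fun i hi => h i (by omega))
    obtain ⟨e, he⟩ := Option.isSome_iff_exists.mp (h n (by omega))
    refine ⟨l ++ [e], ?_, ?_⟩
    · refine isPathL_append hl ⟨?_, List.isChain_singleton _⟩
      intro e' he'
      simp only [List.head?_cons, Option.mem_def, Option.some.injEq] at he'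
      subst he'
      rw [stepE_some he, hrng]
    · rw [pathRng_concat]
      show _ = vtxSeq gs gr v (n + 1)
      simp [vtxSeq, he]

lemma exists_bpath (gs gr : E → V) (v : V) :
    ∃ x : BPath gs gr, HasPrefixP gs gr v [] x := by
  by_cases hall : ∀ n, (stepE gs (vtxSeq gs gr v n)).isSome
  · set f : ℕ → E := fun n => (stepE gs (vtxSeq gs gr v n)).get (hall n) with hfdef
    have hsome : ∀ n, stepE gs (vtxSeq gs gr v n) = some (f n) := fun n =>
      (Option.some_get (hall n)).symm
    have hvtx : ∀ n, vtxSeq gs gr v (n + 1) = gr (f n) := by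
      intro n
      show (match stepE gs (vtxSeq gs gr v n) with
        | some e => gr e
        | none => vtxSeq gs gr v n) = gr (f n)
      rw [hsome n]
    have hgs : ∀ n, gs (f n) = vtxSeq gs gr v n := fun n => stepE_some (hsome n)
    have hb : IsBoundary gs gr (Sum.inr f) := by
      intro n
      rw [hgs (n + 1), hvtx n]
    refine ⟨⟨Sum.inr f, hb⟩, hasPrefixP_inr.mpr ⟨fun _ => ?_, by simp, by simp⟩⟩
    rw [hgs 0]
    rfl
  · push_neg at hall
    have hex : ∃ n, stepE gs (vtxSeq gs gr v n) = none := by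
      obtain ⟨n, hn⟩ := hall
      exact ⟨n, Option.not_isSome_iff_eq_none.mp hn⟩
    classical
    have hnone := Nat.find_spec hex
    have hlt : ∀ i < Nat.find hex, (stepE gs (vtxSeq gs gr v i)).isSome := fun i hi =>
      Option.ne_none_iff_isSome.mp (Nat.find_min hex hi)
    obtain ⟨l, hl, hrng⟩ := exists_path_vtx v (Nat.find hex) hlt
    have hb : IsBoundary gs gr (Sum.inl (v, l)) := by
      refine ⟨hl, ?_⟩
      rw [hrng]
      exact stepE_none hnone
    exact ⟨⟨Sum.inl (v, l), hb⟩, hasPrefixP_inl.mpr ⟨rfl, List.nil_prefix⟩⟩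

/-- Prepend a finite path to the underlying data of a boundary path. -/
def extendFun (v : V) (l : List E) : (V × List E) ⊕ (ℕ → E) → (V × List E) ⊕ (ℕ → E)
  | Sum.inl (_, t) => Sum.inl (v, l ++ t)
  | Sum.inr f => Sum.inr fun n => if h : n < l.length then l.get ⟨n, h⟩ else f (n - l.length)

lemma extend_boundary (v : V) (l : List E) (hl : IsPathL gs gr v l) (x : BPath gs gr)
    (hx : HasPrefixP gs gr (pathRng gr v l) [] x) :
    IsBoundary gs gr (extendFun v l x.1) := by
  obtain ⟨x1, hb⟩ := x
  rcases x1 with ⟨w', t⟩ | f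
  · obtain ⟨hw, -⟩ := hasPrefixP_inl.mp hx
    have hbb : IsPathL gs gr w' t ∧ ¬ RegularVert gs (pathRng gr w' t) := hb
    show IsPathL gs gr v (l ++ t) ∧ ¬ RegularVert gs (pathRng gr v (l ++ t))
    subst hw
    exact ⟨isPathL_append hl hbb.1, by rw [pathRng_append]; exact hbb.2⟩
  · have hf : ∀ n, gr (f n) = gs (f (n + 1)) := hb
    have h0 : gs (f 0) = pathRng gr v l := hasPrefixP_inr_start hx
    intro n
    show gr (if h : n < l.length then l.get ⟨n, h⟩ else f (n - l.length)) =
      gs (if h : n + 1 < l.length then l.get ⟨n + 1, h⟩ else f (n + 1 - l.length))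
    by_cases h1 : n + 1 < l.length
    · rw [dif_pos (by omega : n < l.length), dif_pos h1]
      exact List.isChain_iff_getElem.mp hl.2 n (by omega)
    · by_cases h2 : n < l.length
      · rw [dif_pos h2, dif_neg h1]
        have hnn : n + 1 - l.length = 0 := by omega
        rw [hnn]
        have hne : l ≠ [] := by rintro rfl; simp at h2
        have hget : l.get ⟨n, h2⟩ = l.getLast hne := by
          have : n = l.length - 1 := by omega
          subst this
          exact (List.getLast_eq_getElem hne).symm
        rw [hget, ← pathRng_getLast (gr := gr) v l hne]
        exact h0.symm
      · rw [dif_neg h2, dif_neg h1]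
        have : n + 1 - l.length = (n - l.length) + 1 := by omega
        rw [this]
        exact hf _

/-- Prepend a finite path to a boundary path starting at its range. -/
def extendB (v : V) (l : List E) (hl : IsPathL gs gr v l) (x : BPath gs gr)
    (hx : HasPrefixP gs gr (pathRng gr v l) [] x) : BPath gs gr :=
  ⟨extendFun v l x.1, extend_boundary v l hl x hx⟩

lemma extendB_prefix (v : V) (l : List E) (hl : IsPathL gs gr v l) (x : BPath gs gr)
    (hx : HasPrefixP gs gr (pathRng gr v l) [] x) :
    HasPrefixP gs gr v l (extendB v l hl x hx) := by
  obtain ⟨x1, hb⟩ := x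
  rcases x1 with ⟨w', t⟩ | f
  · exact ⟨rfl, List.prefix_append l t⟩
  · refine ⟨?_, ?_, ?_⟩
    · rintro rfl
      have := hasPrefixP_inr_start hx
      simpa [pathRng] using this
    · exact hl.1
    · intro i hi
      show (if h : i < l.length then l.get ⟨i, h⟩ else _) = l.get ⟨i, hi⟩
      exact dif_pos hi

lemma extendB_agree (v u : V) (l t : List E) (hl : IsPathL gs gr v l)
    (ht : IsPathL gs gr u t) (x : BPath gs gr)
    (hx1 : HasPrefixP gs gr (pathRng gr v l) [] x)
    (hx2 : HasPrefixP gs gr (pathRng gr u t) [] x) :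
    AgreeFrom gs gr l.length t.length (extendB v l hl x hx1) (extendB u t ht x hx2) := by
  obtain ⟨x1, hb⟩ := x
  rcases x1 with ⟨w', s⟩ | f
  · have h1 : w' = pathRng gr v l := (hasPrefixP_inl.mp hx1).1
    have h2 : w' = pathRng gr u t := (hasPrefixP_inl.mp hx2).1
    refine ⟨by simp, by simp, ?_, by rw [List.drop_left, List.drop_left]⟩
    rw [List.take_left, List.take_left, ← h1, ← h2]
  · intro i
    show (if h : l.length + i < l.length then l.get ⟨l.length + i, h⟩
        else f (l.length + i - l.length)) =
      (if h : t.length + i < t.length then t.get ⟨t.length + i, h⟩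
        else f (t.length + i - t.length))
    rw [dif_neg (by omega), dif_neg (by omega)]
    congr 1
    omega

/-- The basic open sets of the boundary path space. -/
def BasicO (gs gr : E → V) (w : V) (m : List E) (F : Set E) : Set (BPath gs gr) :=
  ZP gs gr w m \ ⋃ e ∈ F, ZP gs gr w (m ++ [e])

lemma zp_nonempty {w : V} {κ : List E} (h : IsPathL gs gr w κ) :
    (ZP gs gr w κ).Nonempty := by
  obtain ⟨z, hz⟩ := exists_bpath gs gr (pathRng gr w κ)
  exact ⟨extendB w κ h z hz, extendB_prefix w κ h z hz⟩

/-- The start vertex of a boundary path. -/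
def bStart (x : BPath gs gr) : V :=
  match x.1 with
  | Sum.inl (v, _) => v
  | Sum.inr f => gs (f 0)

lemma bStart_prefix (x : BPath gs gr) : HasPrefixP gs gr (bStart x) [] x := by
  obtain ⟨x1, hb⟩ := x
  rcases x1 with ⟨v, l⟩ | f
  · exact ⟨rfl, List.nil_prefix⟩
  · exact ⟨fun _ => rfl, by simp, by simp⟩

lemma basicO_superset {w : V} {m : List E} {F : Set E} {e0 : E} (he0F : e0 ∉ F) :
    ZP gs gr w (m ++ [e0]) ⊆ BasicO gs gr w m F := by
  intro y hy
  refine ⟨zp_mono (List.prefix_append _ _) _ hy, fun hmem => ?_⟩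
  simp only [Set.mem_iUnion] at hmem
  obtain ⟨e, heF, hye⟩ := hmem
  exact he0F ((prefix_edge_unique hye hy) ▸ heF)

lemma basic_inter {w1 w2 : V} {m1 m2 : List E} {F1 F2 : Set E}
    (hlen : m1.length ≤ m2.length) (hF1 : F1.Finite) (hF2 : F2.Finite)
    (hp2 : IsPathL gs gr w2 m2) (hg1 : ∀ e ∈ F1, gs e = pathRng gr w1 m1)
    (hg2 : ∀ e ∈ F2, gs e = pathRng gr w2 m2) {x : BPath gs gr}
    (hx1 : x ∈ BasicO gs gr w1 m1 F1) (hx2 : x ∈ BasicO gs gr w2 m2 F2) :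
    ∃ (w : V) (m : List E) (F : Set E), F.Finite ∧ IsPathL gs gr w m ∧
      (∀ e ∈ F, gs e = pathRng gr w m) ∧ x ∈ BasicO gs gr w m F ∧
      BasicO gs gr w m F ⊆ BasicO gs gr w1 m1 F1 ∩ BasicO gs gr w2 m2 F2 := by
  have hw : w1 = w2 := prefix_vertex_eq hx1.1 hx2.1
  subst hw
  have hpre : m1 <+: m2 := prefix_nest hx1.1 hx2.1 hlen
  by_cases heq : m1.length = m2.length
  · have hmm : m1 = m2 := hpre.eq_of_length heq
    subst hmm
    refine ⟨w1, m1, F1 ∪ F2, hF1.union hF2, hp2, ?_, ⟨hx1.1, ?_⟩, ?_⟩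
    · intro e he
      rcases he with he | he
      · exact hg1 e he
      · exact hg2 e he
    · intro hmem
      simp only [Set.mem_iUnion, Set.mem_union] at hmem
      obtain ⟨e, he | he, hye⟩ := hmem
      · exact hx1.2 (Set.mem_iUnion.mpr ⟨e, Set.mem_iUnion.mpr ⟨he, hye⟩⟩)
      · exact hx2.2 (Set.mem_iUnion.mpr ⟨e, Set.mem_iUnion.mpr ⟨he, hye⟩⟩)
    · intro y hy
      constructor
      · exact ⟨hy.1, fun hmem => hy.2 (by
          simp only [Set.mem_iUnion] at hmem ⊢
          obtain ⟨e, he, hye⟩ := hmem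
          exact ⟨e, Or.inl he, hye⟩)⟩
      · exact ⟨hy.1, fun hmem => hy.2 (by
          simp only [Set.mem_iUnion] at hmem ⊢
          obtain ⟨e, he, hye⟩ := hmem
          exact ⟨e, Or.inr he, hye⟩)⟩
  · have hlt : m1.length < m2.length := lt_of_le_of_ne hlen heq
    obtain ⟨r, rfl⟩ := hpre
    have hr : r ≠ [] := by
      rintro rfl
      simp at hlt
    have hpre2 : m1 ++ [r.head hr] <+: m1 ++ r := by
      refine ⟨r.tail, ?_⟩
      rw [List.append_assoc]
      simp [List.cons_head_tail hr]
    have hxe0 : x ∈ ZP gs gr w1 (m1 ++ [r.head hr]) := hasPrefixP_mono hpre2 hx2.1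
    have he0F : r.head hr ∉ F1 := fun h =>
      hx1.2 (Set.mem_iUnion.mpr ⟨r.head hr, Set.mem_iUnion.mpr ⟨h, hxe0⟩⟩)
    refine ⟨w1, m1 ++ r, F2, hF2, hp2, hg2, hx2, ?_⟩
    intro y hy
    refine ⟨⟨zp_mono ⟨r, rfl⟩ _ hy.1, fun hmem => ?_⟩, hy⟩
    simp only [Set.mem_iUnion] at hmem
    obtain ⟨e, heF, hye⟩ := hmem
    have hy0 : y ∈ ZP gs gr w1 (m1 ++ [r.head hr]) := hasPrefixP_mono hpre2 hy.1
    exact he0F ((prefix_edge_unique hye hy0) ▸ heF)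

lemma open_basic {U : Set (BPath gs gr)} (hU : @IsOpen _ (unitTop gs gr) U) :
    ∀ x ∈ U, ∃ (w : V) (m : List E) (F : Set E), F.Finite ∧ IsPathL gs gr w m ∧
      (∀ e ∈ F, gs e = pathRng gr w m) ∧ x ∈ BasicO gs gr w m F ∧
      BasicO gs gr w m F ⊆ U := by
  have hU' : TopologicalSpace.GenerateOpen
      {A | ∃ (w : V) (m : List E) (F : Set E), F.Finite ∧ IsPathL gs gr w m ∧
        (∀ e ∈ F, gs e = pathRng gr w m) ∧
        A = ZP gs gr w m \ ⋃ e ∈ F, ZP gs gr w (m ++ [e])} U := hU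
  clear hU
  induction hU' with
  | basic A hA =>
    obtain ⟨w, m, F, hF, hm, hg, rfl⟩ := hA
    exact fun x hx => ⟨w, m, F, hF, hm, hg, hx, subset_rfl⟩
  | univ =>
    intro x _
    refine ⟨bStart x, [], ∅, Set.finite_empty, ⟨by simp, List.isChain_nil⟩, by simp, ?_, ?_⟩
    · exact ⟨bStart_prefix x, by simp⟩
    · exact Set.subset_univ _
  | inter U1 U2 h1 h2 ih1 ih2 =>
    intro x hx
    obtain ⟨w1, m1, F1, hF1, hm1, hg1, hxb1, hsub1⟩ := ih1 x hx.1
    obtain ⟨w2, m2, F2, hF2, hm2, hg2, hxb2, hsub2⟩ := ih2 x hx.2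
    rcases le_total m1.length m2.length with hle | hle
    · obtain ⟨w, m, F, a, b, c, d, e⟩ :=
        basic_inter hle hF1 hF2 hm2 hg1 hg2 hxb1 hxb2
      exact ⟨w, m, F, a, b, c, d, e.trans (Set.inter_subset_inter hsub1 hsub2)⟩
    · obtain ⟨w, m, F, a, b, c, d, e⟩ :=
        basic_inter hle hF2 hF1 hm1 hg2 hg1 hxb2 hxb1
      refine ⟨w, m, F, a, b, c, d, ?_⟩
      intro y hy
      exact ⟨hsub1 (e hy).2, hsub2 (e hy).1⟩
  | sUnion S hS ih =>
    intro x hx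
    obtain ⟨s, hs, hxs⟩ := hx
    obtain ⟨w, m, F, a, b, c, d, e⟩ := ih s hs x hxs
    exact ⟨w, m, F, a, b, c, d, e.trans (Set.subset_sUnion_of_mem hs)⟩

lemma basic_contains_cyl {w : V} {m : List E} {F : Set E} (hF : F.Finite)
    (hm : IsPathL gs gr w m) (hg : ∀ e ∈ F, gs e = pathRng gr w m) {x : BPath gs gr}
    (hx : x ∈ BasicO gs gr w m F) :
    ∃ (w' : V) (κ : List E), IsPathL gs gr w' κ ∧ ZP gs gr w' κ ⊆ BasicO gs gr w m F := by
  obtain ⟨x1, hb⟩ := x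
  rcases x1 with ⟨v, l⟩ | f
  · obtain ⟨hvw, hml⟩ := (hasPrefixP_inl (gs := gs) (gr := gr) (hb := hb)).mp hx.1
    subst hvw
    have hbb : IsPathL gs gr v l ∧ ¬ RegularVert gs (pathRng gr v l) := hb
    by_cases hlen : m.length = l.length
    · have hmm : m = l := hml.eq_of_length hlen
      subst hmm
      by_cases hfin : {e : E | gs e = pathRng gr v m}.Finite
      · have hnon : ¬ {e : E | gs e = pathRng gr v m}.Nonempty := fun hn =>
          hbb.2 ⟨hfin, hn⟩
        refine ⟨v, m, hm, fun y hy => ⟨hy, fun hmem => ?_⟩⟩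
        simp only [Set.mem_iUnion] at hmem
        obtain ⟨e, heF, _⟩ := hmem
        exact hnon ⟨e, hg e heF⟩
      · obtain ⟨e0, he0⟩ := (Set.Infinite.diff hfin hF).nonempty
        refine ⟨v, m ++ [e0], ?_, basicO_superset he0.2⟩
        refine isPathL_append hm ⟨?_, List.isChain_singleton _⟩
        intro e' he'
        simp only [List.head?_cons, Option.mem_def, Option.some.injEq] at he'
        subst he'
        exact he0.1
    · have hlt : m.length < l.length := lt_of_le_of_ne hml.length_le hlen
      obtain ⟨r, rfl⟩ := hml
      have hr : r ≠ [] := by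
        rintro rfl
        simp at hlt
      have hpre2 : m ++ [r.head hr] <+: m ++ r := by
        refine ⟨r.tail, ?_⟩
        rw [List.append_assoc]
        simp [List.cons_head_tail hr]
      have hxe0 : (⟨Sum.inl (v, m ++ r), hb⟩ : BPath gs gr) ∈ ZP gs gr v (m ++ [r.head hr]) :=
        ⟨rfl, hpre2⟩
      have he0F : r.head hr ∉ F := fun h =>
        hx.2 (Set.mem_iUnion.mpr ⟨r.head hr, Set.mem_iUnion.mpr ⟨h, hxe0⟩⟩)
      refine ⟨v, m ++ [r.head hr], ?_, basicO_superset he0F⟩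
      have h1 := isPathL_take hbb.1 (m.length + 1)
      have heq : m ++ [r.head hr] = List.take (m.length + 1) (m ++ r) := by
        have h2 := List.prefix_iff_eq_take.mp hpre2
        simpa using h2
      rwa [← heq] at h1
  · have hf : ∀ n, gr (f n) = gs (f (n + 1)) := hb
    have hxp := (hasPrefixP_inr (gr := gr) (hb := hb)).mp hx.1
    have hgsm : gs (f m.length) = pathRng gr w m := by
      by_cases hm0 : m = []
      · subst hm0
        exact hxp.1 rfl
      · have hpos : 0 < m.length := List.length_pos_iff.mpr hm0
        have hfe : f (m.length - 1) = m.get ⟨m.length - 1, by omega⟩ :=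
          hxp.2.2 (m.length - 1) (by omega)
        calc gs (f m.length) = gs (f ((m.length - 1) + 1)) := by rw [Nat.sub_add_cancel hpos]
          _ = gr (f (m.length - 1)) := (hf _).symm
          _ = gr (m.get ⟨m.length - 1, by omega⟩) := by rw [hfe]
          _ = gr (m.getLast hm0) := by simp [List.getLast_eq_getElem]
          _ = pathRng gr w m := (pathRng_getLast w m hm0).symm
    have hpath : IsPathL gs gr w (m ++ [f m.length]) := by
      refine isPathL_append hm ⟨?_, List.isChain_singleton _⟩
      intro e' he'
      simp only [List.head?_cons, Option.mem_def, Option.some.injEq] at he'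
      subst he'
      exact hgsm
    have hxe : HasPrefixP gs gr w (m ++ [f m.length]) (⟨Sum.inr f, hb⟩ : BPath gs gr) := by
      refine hasPrefixP_inr.mpr ⟨by simp, ?_, ?_⟩
      · intro e he
        rcases m with _ | ⟨a, t⟩
        · simp only [List.nil_append, List.head?_cons, Option.mem_def,
            Option.some.injEq] at he
          subst he
          exact hxp.1 rfl
        · simp only [List.cons_append, List.head?_cons, Option.mem_def,
            Option.some.injEq] at he
          subst he
          exact hxp.2.1 _ rfl
      · intro i hi
        by_cases him : i < m.length
        · rw [← isPrefix_get (List.prefix_append m [f m.length]) i him]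
          exact hxp.2.2 i him
        · have hieq : i = m.length := by
            simp only [List.length_append, List.length_singleton] at hi
            omega
          subst hieq
          simp only [List.get_eq_getElem]
          rw [List.getElem_concat_length rfl]
    have he0F : f m.length ∉ F := fun h =>
      hx.2 (Set.mem_iUnion.mpr ⟨_, Set.mem_iUnion.mpr ⟨h, hxe⟩⟩)
    exact ⟨w, m ++ [f m.length], hpath, basicO_superset he0F⟩

lemma open_contains_cyl {U : Set (BPath gs gr)} (hU : @IsOpen _ (unitTop gs gr) U)
    (hne : U.Nonempty) :
    ∃ (w : V) (κ : List E), IsPathL gs gr w κ ∧ ZP gs gr w κ ⊆ U := by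
  obtain ⟨x, hx⟩ := hne
  obtain ⟨w, m, F, hF, hm, hg, hxb, hsub⟩ := open_basic hU x hx
  obtain ⟨w', κ, hκ, hsub'⟩ := basic_contains_cyl hF hm hg hxb
  exact ⟨w', κ, hκ, hsub'.trans hsub⟩

lemma zp_nil_open (u : V) : @IsOpen _ (unitTop gs gr) (ZP gs gr u []) := by
  refine TopologicalSpace.GenerateOpen.basic _ ?_
  refine ⟨u, [], ∅, Set.finite_empty, ⟨by simp, List.isChain_nil⟩, by simp, ?_⟩
  simp

lemma agree_to_paths {x y : BPath gs gr} {u v : V} (hx : HasPrefixP gs gr v [] x)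
    (hy : HasPrefixP gs gr u [] y) {m n : ℕ} (h : AgreeFrom gs gr m n x y) :
    ∃ (w : V) (l t : List E), IsPathL gs gr v l ∧ pathRng gr v l = w ∧
      IsPathL gs gr u t ∧ pathRng gr u t = w := by
  obtain ⟨x1, hbx⟩ := x
  obtain ⟨y1, hby⟩ := y
  rcases x1 with ⟨v', lx⟩ | f <;> rcases y1 with ⟨u', ly⟩ | g
  · obtain ⟨hm, hn, hrng, -⟩ := agreeFrom_inl_inl.mp h
    obtain ⟨hv, -⟩ := hasPrefixP_inl.mp hx
    obtain ⟨hu, -⟩ := hasPrefixP_inl.mp hy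
    subst hv
    subst hu
    have hbx' : IsPathL gs gr v' lx ∧ _ := hbx
    have hby' : IsPathL gs gr u' ly ∧ _ := hby
    exact ⟨pathRng gr v' (lx.take m), lx.take m, ly.take n, isPathL_take hbx'.1 m, rfl,
      isPathL_take hby'.1 n, hrng.symm⟩
  · exact (agreeFrom_inl_inr.mp h).elim
  · exact (agreeFrom_inr_inl.mp h).elim
  · have hfv : gs (f 0) = v := hasPrefixP_inr_start hx
    have hgu : gs (g 0) = u := hasPrefixP_inr_start hy
    obtain ⟨hl1, hl2⟩ := infpath_take f hbx hfv m
    obtain ⟨ht1, ht2⟩ := infpath_take g hby hgu n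
    have hkey : gs (f m) = gs (g n) := by
      have h0 := agreeFrom_inr_inr.mp h 0
      rw [Nat.add_zero, Nat.add_zero] at h0
      rw [h0]
    exact ⟨gs (f m), _, _, hl1, hl2, ht1, ht2.trans hkey.symm⟩

end Aux

/-- The graph groupoid `G_E` is topologically transitive — for all
nonempty open `U, V ⊆ G_E⁰` there is `γ ∈ G_E` with `d γ ∈ U` and `r γ ∈ V` (i.e.
there are `x ∈ V` and `y ∈ U` with a common tail) — if and only if `E` is downward
directed: any two vertices `u, v` admit paths from `u` and from `v` to a common
vertex `w`. -/
theorem graph_groupoid_topologically_transitive_iff {V E : Type*} (gs gr : E → V) :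
    (∀ U W : Set (BPath gs gr), @IsOpen _ (unitTop gs gr) U →
      @IsOpen _ (unitTop gs gr) W → U.Nonempty → W.Nonempty →
      ∃ x ∈ W, ∃ y ∈ U, ∃ m n : ℕ, AgreeFrom gs gr m n x y) ↔
    (∀ u v : V, ∃ (w : V) (l t : List E),
      IsPathL gs gr u l ∧ pathRng gr u l = w ∧
      IsPathL gs gr v t ∧ pathRng gr v t = w) := by
  constructor
  · intro h u v
    obtain ⟨xu, hxu⟩ := exists_bpath gs gr u
    obtain ⟨xv, hxv⟩ := exists_bpath gs gr v
    obtain ⟨x, hx, y, hy, m, n, hagree⟩ :=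
      h (ZP gs gr u []) (ZP gs gr v []) (zp_nil_open u) (zp_nil_open v) ⟨xu, hxu⟩ ⟨xv, hxv⟩
    obtain ⟨w, l, t, h1, h2, h3, h4⟩ := agree_to_paths hx hy hagree
    exact ⟨w, t, l, h3, h4, h1, h2⟩
  · intro dd U W hU hW hUne hWne
    obtain ⟨wU, κU, hκU, hκUsub⟩ := open_contains_cyl hU hUne
    obtain ⟨wW, κW, hκW, hκWsub⟩ := open_contains_cyl hW hWne
    obtain ⟨w, l, t, hl, hlr, ht, htr⟩ := dd (pathRng gr wW κW) (pathRng gr wU κU)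
    obtain ⟨z, hz⟩ := exists_bpath gs gr w
    have hpW : IsPathL gs gr wW (κW ++ l) := isPathL_append hκW hl
    have hpU : IsPathL gs gr wU (κU ++ t) := isPathL_append hκU ht
    have hrW : pathRng gr wW (κW ++ l) = w := by rw [pathRng_append, hlr]
    have hrU : pathRng gr wU (κU ++ t) = w := by rw [pathRng_append, htr]
    have hzW : HasPrefixP gs gr (pathRng gr wW (κW ++ l)) [] z := by rw [hrW]; exact hz
    have hzU : HasPrefixP gs gr (pathRng gr wU (κU ++ t)) [] z := by rw [hrU]; exact hz
    exact ⟨extendB wW (κW ++ l) hpW z hzW,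
      hκWsub (zp_mono (List.prefix_append κW l) _ (extendB_prefix _ _ hpW z hzW)),
      extendB wU (κU ++ t) hpU z hzU,
      hκUsub (zp_mono (List.prefix_append κU t) _ (extendB_prefix _ _ hpU z hzU)),
      (κW ++ l).length, (κU ++ t).length,
      extendB_agree _ _ _ _ hpW hpU z hzW hzU⟩
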